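/- Suppose ρ ∈ ℂ^{2n+2} satisfies ρᵀAₙ = λρᵀ and ρᵀB = 0, and suppose λ² + α₂λ + α₁ ≠ 0 and α₃λ + α₁ ≠ 0. Then ρ = 0. -/

import Mathlib

def platoonA (α₁ α₂ α₃ : ℝ) (n : ℕ) : Matrix (Fin (2 * n + 2)) (Fin (2 * n + 2)) ℝ :=
  Matrix.of fun i j =>
    if i.val = 0 ∧ j.val = 1 then 1
    else if 2 ≤ i.val ∧ i.val % 2 = 0 ∧ j.val = i.val + 1 then -1
    else if 2 ≤ i.val ∧ i.val % 2 = 0 ∧ j.val + 1 = i.val then 1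
    else if 3 ≤ i.val ∧ i.val % 2 = 1 ∧ j.val + 1 = i.val then α₁
    else if 3 ≤ i.val ∧ i.val % 2 = 1 ∧ j.val = i.val then -α₂
    else if 3 ≤ i.val ∧ i.val % 2 = 1 ∧ j.val + 2 = i.val then α₃
    else 0

noncomputable def platoonAC (α₁ α₂ α₃ : ℝ) (n : ℕ) :
    Matrix (Fin (2 * n + 2)) (Fin (2 * n + 2)) ℂ :=
  (platoonA α₁ α₂ α₃ n).map (fun x => (x : ℂ))

def platoonBC (n : ℕ) : Fin (2 * n + 2) → ℂ := fun i => if i.val = 1 then 1 else 0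

lemma platoonAC_apply (α₁ α₂ α₃ : ℝ) (n : ℕ) (i j : Fin (2 * n + 2)) :
    platoonAC α₁ α₂ α₃ n i j =
    if i.val = 0 ∧ j.val = 1 then 1
    else if 2 ≤ i.val ∧ i.val % 2 = 0 ∧ j.val = i.val + 1 then -1
    else if 2 ≤ i.val ∧ i.val % 2 = 0 ∧ j.val + 1 = i.val then 1
    else if 3 ≤ i.val ∧ i.val % 2 = 1 ∧ j.val + 1 = i.val then (α₁ : ℂ)
    else if 3 ≤ i.val ∧ i.val % 2 = 1 ∧ j.val = i.val then -(α₂ : ℂ)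
    else if 3 ≤ i.val ∧ i.val % 2 = 1 ∧ j.val + 2 = i.val then (α₃ : ℂ)
    else 0 := by
  simp only [platoonAC, platoonA, Matrix.map_apply, Matrix.of_apply]
  split_ifs <;> push_cast <;> ring
lemma sum_dite_spike {N k : ℕ} (c : k < N → ℂ) :
    (∑ i : Fin N, if h : k < N then (if i = ⟨k, h⟩ then c h else 0) else 0)
      = if h : k < N then c h else 0 := by
  split_ifs with h <;> simp

set_option maxHeartbeats 2000000 in
/-- If `ρ` is a left eigenvector of the `1+n` platoon matrix `Aₙ` for `λ` with
`ρᵀB = 0`, and `λ² + α₂λ + α₁ ≠ 0` and `α₃λ + α₁ ≠ 0`, then `ρ = 0`. -/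
theorem platoon_left_eigenvector_trivial (α₁ α₂ α₃ : ℝ) (n : ℕ) (hn : 1 ≤ n)
    (l : ℂ) (ρ : Fin (2 * n + 2) → ℂ)
    (heig : Matrix.vecMul ρ (platoonAC α₁ α₂ α₃ n) = l • ρ)
    (hB : dotProduct ρ (platoonBC n) = 0)
    (h1 : l ^ 2 + (α₂ : ℂ) * l + (α₁ : ℂ) ≠ 0)
    (h2 : (α₃ : ℂ) * l + (α₁ : ℂ) ≠ 0) :
    ρ = 0 := by
  classical
  set e : ℕ → ℂ := fun k => if h : k < 2 * n + 2 then ρ ⟨k, h⟩ else 0 with he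
  have hebig : ∀ k : ℕ, ¬ k < 2 * n + 2 → e k = 0 := by
    intro k hk; simp [he, hk]
  have hesmall : ∀ (k : ℕ) (hk : k < 2 * n + 2), e k = ρ ⟨k, hk⟩ := by
    intro k hk; simp [he, hk]
  have hcol : ∀ j : Fin (2 * n + 2),
      (∑ i, ρ i * platoonAC α₁ α₂ α₃ n i j) = l * ρ j := by
    intro j
    have := congrFun heig j
    simpa [Matrix.vecMul, dotProduct] using this
  have spike_sum : ∀ (k : ℕ) (c : ℂ),
      (∑ i : Fin (2 * n + 2),
        if h : k < 2 * n + 2 then (if i = ⟨k, h⟩ then c * ρ ⟨k, h⟩ else 0) else 0)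
        = c * e k := by
    intro k c
    rw [sum_dite_spike (fun h => c * ρ ⟨k, h⟩)]
    by_cases h : k < 2 * n + 2 <;> simp [he, h]
  -- even columns ≥ 2
  have hE : ∀ jv : ℕ, 2 ≤ jv → jv % 2 = 0 → jv < 2 * n + 2 →
      (α₁ : ℂ) * e (jv + 1) = l * e jv := by
    intro jv hj2 hjp hjv
    have key : (∑ i, ρ i * platoonAC α₁ α₂ α₃ n i ⟨jv, hjv⟩)
        = ∑ i : Fin (2 * n + 2),
          (if h : jv + 1 < 2 * n + 2 then
            (if i = ⟨jv + 1, h⟩ then (α₁ : ℂ) * ρ ⟨jv + 1, h⟩ else 0) else 0) := by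
      refine Finset.sum_congr rfl fun i _ => ?_
      obtain ⟨iv, hiv⟩ := i
      simp only [platoonAC_apply, Fin.mk.injEq, and_true, true_and]
      split_ifs <;> first | (exfalso; omega) | (subst_vars; ring) | (exfalso; tauto)
    have h0 := hcol ⟨jv, hjv⟩
    rw [key, spike_sum, ← hesmall jv hjv] at h0
    exact h0
  -- odd columns ≥ 3
  have hO : ∀ jv : ℕ, 3 ≤ jv → jv % 2 = 1 → jv < 2 * n + 2 →
      -e (jv - 1) + e (jv + 1) - (α₂ : ℂ) * e jv + (α₃ : ℂ) * e (jv + 2)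
        = l * e jv := by
    intro jv hj3 hjp hjv
    have key : (∑ i, ρ i * platoonAC α₁ α₂ α₃ n i ⟨jv, hjv⟩)
        = (∑ i : Fin (2 * n + 2),
            ((if h : jv - 1 < 2 * n + 2 then
              (if i = ⟨jv - 1, h⟩ then (-1 : ℂ) * ρ ⟨jv - 1, h⟩ else 0) else 0)
            + ((if h : jv < 2 * n + 2 then
              (if i = ⟨jv, h⟩ then (-(α₂ : ℂ)) * ρ ⟨jv, h⟩ else 0) else 0)
            + ((if h : jv + 1 < 2 * n + 2 then
              (if i = ⟨jv + 1, h⟩ then (1 : ℂ) * ρ ⟨jv + 1, h⟩ else 0) else 0)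
            + (if h : jv + 2 < 2 * n + 2 then
              (if i = ⟨jv + 2, h⟩ then (α₃ : ℂ) * ρ ⟨jv + 2, h⟩ else 0) else 0))))) := by
      refine Finset.sum_congr rfl fun i _ => ?_
      obtain ⟨iv, hiv⟩ := i
      simp only [platoonAC_apply, Fin.mk.injEq, and_true, true_and]
      split_ifs <;> first | (exfalso; omega) | (subst_vars; ring) | (exfalso; tauto)
    have h0 := hcol ⟨jv, hjv⟩
    rw [key] at h0
    rw [Finset.sum_add_distrib, Finset.sum_add_distrib, Finset.sum_add_distrib,
      spike_sum, spike_sum, spike_sum, spike_sum, ← hesmall jv hjv] at h0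
    linear_combination h0
  -- column 1
  have hC1 : e 0 + e 2 + (α₃ : ℂ) * e 3 = l * e 1 := by
    have hjv : (1 : ℕ) < 2 * n + 2 := by omega
    have key : (∑ i, ρ i * platoonAC α₁ α₂ α₃ n i ⟨1, hjv⟩)
        = (∑ i : Fin (2 * n + 2),
            ((if h : 0 < 2 * n + 2 then
              (if i = ⟨0, h⟩ then (1 : ℂ) * ρ ⟨0, h⟩ else 0) else 0)
            + ((if h : 2 < 2 * n + 2 then
              (if i = ⟨2, h⟩ then (1 : ℂ) * ρ ⟨2, h⟩ else 0) else 0)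
            + (if h : 3 < 2 * n + 2 then
              (if i = ⟨3, h⟩ then (α₃ : ℂ) * ρ ⟨3, h⟩ else 0) else 0)))) := by
      refine Finset.sum_congr rfl fun i _ => ?_
      obtain ⟨iv, hiv⟩ := i
      simp only [platoonAC_apply, Fin.mk.injEq, and_true, true_and]
      split_ifs <;> first | (exfalso; omega) | (subst_vars; ring) | (exfalso; tauto)
    have h0 := hcol ⟨1, hjv⟩
    rw [key] at h0
    rw [Finset.sum_add_distrib, Finset.sum_add_distrib,
      spike_sum, spike_sum, spike_sum, ← hesmall 1 hjv] at h0
    linear_combination h0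
  -- e 1 = 0 from hB
  have he1 : e 1 = 0 := by
    have h1lt : (1 : ℕ) < 2 * n + 2 := by omega
    rw [hesmall 1 h1lt]
    rw [dotProduct] at hB
    have : (∑ i, ρ i * platoonBC n i) = ρ ⟨1, h1lt⟩ := by
      rw [Fintype.sum_eq_single (⟨1, h1lt⟩ : Fin (2 * n + 2))]
      · simp [platoonBC]
      · intro b hb
        have : b.val ≠ 1 := fun hbv => hb (Fin.ext hbv)
        simp [platoonBC, this]
    rw [this] at hB
    exact hB
  -- the recursion for odd entries
  have hkey : ∀ jv : ℕ, 3 ≤ jv → jv % 2 = 1 → jv < 2 * n + 2 →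
      (l ^ 2 + (α₂ : ℂ) * l + (α₁ : ℂ)) * e jv
        = ((α₃ : ℂ) * l + (α₁ : ℂ)) * e (jv + 2) := by
    intro jv hj3 hjp hjv
    have ho := hO jv hj3 hjp hjv
    have heq1 : (α₁ : ℂ) * e jv = l * e (jv - 1) := by
      have := hE (jv - 1) (by omega) (by omega) (by omega)
      rwa [show jv - 1 + 1 = jv from by omega] at this
    have heq2 : (α₁ : ℂ) * e (jv + 2) = l * e (jv + 1) := by
      by_cases hlt2 : jv + 1 < 2 * n + 2
      · exact hE (jv + 1) (by omega) (by omega) hlt2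
      · rw [hebig (jv + 1) (by omega), hebig (jv + 2) (by omega)]
        ring
    linear_combination (-l) * ho + heq1 - heq2
  -- odd entries vanish
  have hodd_aux : ∀ d jv : ℕ, 3 ≤ jv → jv % 2 = 1 → 2 * n + 2 ≤ jv + 2 * d + 2 →
      e jv = 0 := by
    intro d
    induction d with
    | zero =>
      intro jv hj3 hjp hb
      by_cases hlt : jv < 2 * n + 2
      · have hk := hkey jv hj3 hjp hlt
        rw [hebig (jv + 2) (by omega), mul_zero] at hk
        exact (mul_eq_zero.mp hk).resolve_left h1
      · exact hebig jv hlt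
    | succ d ih =>
      intro jv hj3 hjp hb
      by_cases hlt : jv < 2 * n + 2
      · have hk := hkey jv hj3 hjp hlt
        rw [ih (jv + 2) (by omega) (by omega) (by omega), mul_zero] at hk
        exact (mul_eq_zero.mp hk).resolve_left h1
      · exact hebig jv hlt
  have hodd : ∀ jv : ℕ, 3 ≤ jv → jv % 2 = 1 → e jv = 0 := by
    intro jv hj3 hjp
    exact hodd_aux n jv hj3 hjp (by omega)
  -- even entries
  have heven_step : ∀ jv : ℕ, 2 ≤ jv → jv % 2 = 0 → jv < 2 * n + 2 →
      e jv = e (jv + 2) := by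
    intro jv hj2 hjp hjv
    have h1lt : jv + 1 < 2 * n + 2 := by omega
    have ho := hO (jv + 1) (by omega) (by omega) h1lt
    rw [show jv + 1 - 1 = jv from by omega, show jv + 1 + 1 = jv + 2 from by omega,
      show jv + 1 + 2 = jv + 3 from by omega,
      hodd (jv + 1) (by omega) (by omega), hodd (jv + 3) (by omega) (by omega)] at ho
    linear_combination -ho
  have heven_aux : ∀ d jv : ℕ, 2 ≤ jv → jv % 2 = 0 → 2 * n + 2 ≤ jv + 2 * d →
      e jv = 0 := by
    intro d
    induction d with
    | zero =>
      intro jv hj2 hjp hb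
      exact hebig jv (by omega)
    | succ d ih =>
      intro jv hj2 hjp hb
      by_cases hlt : jv < 2 * n + 2
      · rw [heven_step jv hj2 hjp hlt]
        exact ih (jv + 2) (by omega) (by omega) (by omega)
      · exact hebig jv hlt
  have heven : ∀ jv : ℕ, 2 ≤ jv → jv % 2 = 0 → e jv = 0 := by
    intro jv hj2 hjp
    exact heven_aux (n + 1) jv hj2 hjp (by omega)
  have he0 : e 0 = 0 := by
    have := hC1
    rw [he1, heven 2 (by omega) (by omega), hodd 3 (by omega) (by omega)] at this
    linear_combination this
  funext i
  have hi : e i.val = 0 := by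
    rcases Nat.lt_or_ge i.val 2 with h | h
    · interval_cases hiv : i.val
      · exact he0
      · exact he1
    · rcases Nat.even_or_odd i.val with hp | hp
      · exact heven i.val h (Nat.even_iff.mp hp)
      · have hp' := Nat.odd_iff.mp hp
        exact hodd i.val (by omega) hp'
  rw [hesmall i.val i.isLt] at hi
  simpa using hi
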